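/- Let M be symmetric positive definite d×d, v ∈ ℝ^d, and u(q) = (M + diag(q))^{-1} v. Suppose that for all q in a set F ⊆ ℝ^d, all entries of u(q) lie in [C₁, C₂] with 0 < C₁ ≤ C₂, and λ_min(M + diag(q)) ≥ c > 0 and λ_max(M + diag(q)) ≤ C for all q ∈ F. Then for all q₁, q₂ ∈ F: |u(q₁) − u(q₂)| ≤ (C₂/c)|q₁ − q₂| and |q₁ − q₂| ≤ (C/C₁)|u(q₁) − u(q₂)|, where |·| is the Euclidean norm. -/

import Mathlib

open Matrix

/-- Euclidean norm on `ℝ^d`. -/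
noncomputable def enorm7 {d : ℕ} (x : Fin d → ℝ) : ℝ := Real.sqrt (∑ i, x i ^ 2)

/-- `u(q) = (M + diag(q))⁻¹ v`. -/
noncomputable def uSol {d : ℕ} (M : Matrix (Fin d) (Fin d) ℝ) (v : Fin d → ℝ)
    (q : Fin d → ℝ) : Fin d → ℝ :=
  (M + Matrix.diagonal q)⁻¹ *ᵥ v

lemma enorm7_nonneg {d : ℕ} (x : Fin d → ℝ) : 0 ≤ enorm7 x := Real.sqrt_nonneg _

lemma enorm7_le_mul {d : ℕ} {w z : Fin d → ℝ} {K : ℝ} (hK : 0 ≤ K)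
    (h : ∀ i, w i ^ 2 ≤ K ^ 2 * z i ^ 2) : enorm7 w ≤ K * enorm7 z := by
  unfold enorm7
  calc Real.sqrt (∑ i, w i ^ 2) ≤ Real.sqrt (∑ i, K ^ 2 * z i ^ 2) :=
        Real.sqrt_le_sqrt (Finset.sum_le_sum fun i _ => h i)
    _ = Real.sqrt (K ^ 2 * ∑ i, z i ^ 2) := by rw [Finset.mul_sum]
    _ = K * Real.sqrt (∑ i, z i ^ 2) := by
        rw [Real.sqrt_mul (sq_nonneg K), Real.sqrt_sq hK]

lemma mul_enorm7_le {d : ℕ} {w z : Fin d → ℝ} {K : ℝ} (hK : 0 ≤ K)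
    (h : ∀ i, K ^ 2 * z i ^ 2 ≤ w i ^ 2) : K * enorm7 z ≤ enorm7 w := by
  unfold enorm7
  calc K * Real.sqrt (∑ i, z i ^ 2) = Real.sqrt (K ^ 2 * ∑ i, z i ^ 2) := by
        rw [Real.sqrt_mul (sq_nonneg K), Real.sqrt_sq hK]
    _ = Real.sqrt (∑ i, K ^ 2 * z i ^ 2) := by rw [Finset.mul_sum]
    _ ≤ Real.sqrt (∑ i, w i ^ 2) :=
        Real.sqrt_le_sqrt (Finset.sum_le_sum fun i _ => h i)

lemma enorm7_sub_symm {d : ℕ} (x y : Fin d → ℝ) : enorm7 (x - y) = enorm7 (y - x) := by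
  unfold enorm7
  congr 1
  exact Finset.sum_congr rfl fun i _ => by simp [Pi.sub_apply]; ring

lemma enorm7_sq_eq {d : ℕ} {A : Matrix (Fin d) (Fin d) ℝ} (hA : A.IsHermitian)
    (z : Fin d → ℝ) :
    enorm7 z ^ 2 = ∑ i, (⇑(hA.eigenvectorBasis i) ⬝ᵥ z) ^ 2 := by
  set B := hA.eigenvectorBasis
  have h1 : enorm7 z = ‖(WithLp.equiv 2 (Fin d → ℝ)).symm z‖ := by
    simp [enorm7, EuclideanSpace.norm_eq, Real.norm_eq_abs, sq_abs]
  have h2 := B.repr.norm_map ((WithLp.equiv 2 (Fin d → ℝ)).symm z)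
  rw [h1, ← h2, EuclideanSpace.norm_eq, Real.sq_sqrt (by positivity)]
  refine Finset.sum_congr rfl fun i _ => ?_
  rw [B.repr_apply_apply]
  simp [PiLp.inner_apply, RCLike.inner_apply, dotProduct, mul_comm]

/-- Norm bounds for a Hermitian matrix with eigenvalues in `[c, C]`. -/
lemma key_bounds {d : ℕ} {A : Matrix (Fin d) (Fin d) ℝ} (hA : A.IsHermitian)
    {c C : ℝ} (hc : 0 ≤ c) (hC : 0 ≤ C)
    (h : ∀ i, c ≤ hA.eigenvalues i ∧ hA.eigenvalues i ≤ C) (x : Fin d → ℝ) :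
    c * enorm7 x ≤ enorm7 (A *ᵥ x) ∧ enorm7 (A *ᵥ x) ≤ C * enorm7 x := by
  set B := hA.eigenvectorBasis
  have hsym : Aᵀ = A := by
    ext i j
    simpa using congrFun (congrFun hA.eq i) j
  have hAz : ∀ i, ⇑(B i) ⬝ᵥ (A *ᵥ x) = hA.eigenvalues i * (⇑(B i) ⬝ᵥ x) := by
    intro i
    rw [Matrix.dotProduct_mulVec, ← Matrix.mulVec_transpose, hsym,
      hA.mulVec_eigenvectorBasis, smul_dotProduct, smul_eq_mul]
  have hx := enorm7_sq_eq hA x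
  have hAx := enorm7_sq_eq hA (A *ᵥ x)
  have hsq : ∀ i, c ^ 2 * (⇑(B i) ⬝ᵥ x) ^ 2 ≤ (⇑(B i) ⬝ᵥ (A *ᵥ x)) ^ 2 ∧
      (⇑(B i) ⬝ᵥ (A *ᵥ x)) ^ 2 ≤ C ^ 2 * (⇑(B i) ⬝ᵥ x) ^ 2 := by
    intro i
    rw [hAz i, mul_pow]
    obtain ⟨h1, h2⟩ := h i
    have hl : c ^ 2 ≤ hA.eigenvalues i ^ 2 := by nlinarith
    have hu : hA.eigenvalues i ^ 2 ≤ C ^ 2 := by nlinarith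
    exact ⟨mul_le_mul_of_nonneg_right hl (sq_nonneg _),
      mul_le_mul_of_nonneg_right hu (sq_nonneg _)⟩
  constructor
  · have h1 : c ^ 2 * enorm7 x ^ 2 ≤ enorm7 (A *ᵥ x) ^ 2 := by
      rw [hx, hAx, Finset.mul_sum]
      exact Finset.sum_le_sum fun i _ => (hsq i).1
    nlinarith [enorm7_nonneg x, enorm7_nonneg (A *ᵥ x), mul_nonneg hc (enorm7_nonneg x)]
  · have h2 : enorm7 (A *ᵥ x) ^ 2 ≤ C ^ 2 * enorm7 x ^ 2 := by
      rw [hx, hAx, Finset.mul_sum]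
      exact Finset.sum_le_sum fun i _ => (hsq i).2
    nlinarith [enorm7_nonneg x, enorm7_nonneg (A *ᵥ x), mul_nonneg hC (enorm7_nonneg x)]

/-- Two-sided Lipschitz stability: `|u(q₁) − u(q₂)| ≤ (C₂/c)|q₁ − q₂|` and
`|q₁ − q₂| ≤ (C/C₁)|u(q₁) − u(q₂)|`. -/
theorem stmt7 {d : ℕ} (M : Matrix (Fin d) (Fin d) ℝ) (v : Fin d → ℝ)
    (hM : M.PosDef) (F : Set (Fin d → ℝ)) (C₁ C₂ c C : ℝ)
    (hC₁ : 0 < C₁) (hC₁₂ : C₁ ≤ C₂) (hc : 0 < c)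
    (hbounds : ∀ q ∈ F, ∀ i, C₁ ≤ uSol M v q i ∧ uSol M v q i ≤ C₂)
    (heig : ∀ q ∈ F, ∀ μ ∈ spectrum ℝ (M + Matrix.diagonal q), c ≤ μ ∧ μ ≤ C) :
    ∀ q₁ ∈ F, ∀ q₂ ∈ F,
      enorm7 (uSol M v q₁ - uSol M v q₂) ≤ (C₂ / c) * enorm7 (q₁ - q₂) ∧
      enorm7 (q₁ - q₂) ≤ (C / C₁) * enorm7 (uSol M v q₁ - uSol M v q₂) := by
  intro q₁ hq₁ q₂ hq₂
  rcases Nat.eq_zero_or_pos d with hd | hd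
  · subst hd
    have h0 : ∀ x : Fin 0 → ℝ, enorm7 x = 0 := by intro x; simp [enorm7]
    refine ⟨?_, ?_⟩ <;> rw [h0, h0] <;> simp
  -- Hermitian matrices
  have hHerm : ∀ q : Fin d → ℝ, (M + Matrix.diagonal q).IsHermitian :=
    fun q => hM.isHermitian.add (Matrix.isHermitian_diagonal q)
  have heigs : ∀ q ∈ F, ∀ i, c ≤ (hHerm q).eigenvalues i ∧ (hHerm q).eigenvalues i ≤ C :=
    fun q hq i => heig q hq _ ((hHerm q).eigenvalues_mem_spectrum_real i)
  have hC : 0 ≤ C := by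
    have := (heigs q₁ hq₁ ⟨0, hd⟩)
    linarith
  -- invertibility and A *ᵥ u = v
  have hAu : ∀ q ∈ F, (M + Matrix.diagonal q) *ᵥ uSol M v q = v := by
    intro q hq
    have hdet : (M + Matrix.diagonal q).det ≠ 0 := by
      rw [(hHerm q).det_eq_prod_eigenvalues]
      have : (0:ℝ) < ∏ i, (hHerm q).eigenvalues i :=
        Finset.prod_pos fun i _ => lt_of_lt_of_le hc (heigs q hq i).1
      exact ne_of_gt this
    unfold uSol
    rw [Matrix.mulVec_mulVec, Matrix.mul_nonsing_inv _ (isUnit_iff_ne_zero.mpr hdet), Matrix.one_mulVec]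
  set u₁ := uSol M v q₁
  set u₂ := uSol M v q₂
  set A₁ := M + Matrix.diagonal q₁ with hA₁def
  -- key identity
  have hkey : A₁ *ᵥ (u₁ - u₂) = fun i => (q₂ i - q₁ i) * u₂ i := by
    have h1 : A₁ *ᵥ u₁ = v := hAu q₁ hq₁
    have h2 : (M + Matrix.diagonal q₂) *ᵥ u₂ = v := hAu q₂ hq₂
    funext i
    have : (A₁ *ᵥ (u₁ - u₂)) i = (A₁ *ᵥ u₁) i - (A₁ *ᵥ u₂) i := by
      rw [Matrix.mulVec_sub]; simp
    rw [this, h1, ← h2]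
    simp [hA₁def, Matrix.add_mulVec, Matrix.mulVec_diagonal]
    ring
  set w : Fin d → ℝ := fun i => (q₂ i - q₁ i) * u₂ i with hw
  -- bounds on w
  have hb2 : ∀ i, C₁ ≤ u₂ i ∧ u₂ i ≤ C₂ := hbounds q₂ hq₂
  have hwle : enorm7 w ≤ C₂ * enorm7 (q₂ - q₁) := by
    refine enorm7_le_mul (le_trans hC₁.le hC₁₂) fun i => ?_
    obtain ⟨h1, h2⟩ := hb2 i
    have hu : u₂ i ^ 2 ≤ C₂ ^ 2 := by nlinarith
    have := mul_le_mul_of_nonneg_left hu (sq_nonneg (q₂ i - q₁ i))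
    simp only [hw, Pi.sub_apply]
    nlinarith
  have hwge : C₁ * enorm7 (q₂ - q₁) ≤ enorm7 w := by
    refine mul_enorm7_le hC₁.le fun i => ?_
    obtain ⟨h1, h2⟩ := hb2 i
    have hu : C₁ ^ 2 ≤ u₂ i ^ 2 := by nlinarith
    have := mul_le_mul_of_nonneg_left hu (sq_nonneg (q₂ i - q₁ i))
    simp only [hw, Pi.sub_apply]
    nlinarith
  have hkb := key_bounds (hHerm q₁) hc.le hC (heigs q₁ hq₁) (u₁ - u₂)
  rw [hkey] at hkb
  have hsymm : enorm7 (q₁ - q₂) = enorm7 (q₂ - q₁) := enorm7_sub_symm q₁ q₂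
  constructor
  · have : c * enorm7 (u₁ - u₂) ≤ C₂ * enorm7 (q₂ - q₁) := le_trans hkb.1 hwle
    rw [hsymm, div_mul_eq_mul_div, le_div_iff₀ hc]
    linarith
  · have : C₁ * enorm7 (q₂ - q₁) ≤ C * enorm7 (u₁ - u₂) := le_trans hwge hkb.2
    rw [hsymm, div_mul_eq_mul_div, le_div_iff₀ hC₁]
    linarith
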